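/- Suppose there exist a vector v and real numbers a, b such that ⟪v, x_k⟫ = a and ⟪v, y_k⟫ = b for all k = 1,…,N, and suppose the matrices Q^x and Q^y are doubly stochastic, i.e. Σ_{k=1}^N Q^x(k,i) = 1 for every i and Σ_{k=1}^N Q^y(i,k) = 1 for every i (the remaining row/column sums equal 1 by construction). Then for any step size η ∈ ℝ, the gradient-descent update x_k' = x_k − η·∇_{x_k}L and y_k' = y_k − η·∇_{y_k}L satisfies ⟪v, x_k'⟫ = a and ⟪v, y_k'⟫ = b for all k; i.e. a gradient step on the contrastive loss leaves the projections of both modalities onto v unchanged. -/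

import Mathlib

/-!
STATEMENT 2: If the projections of both modalities onto `v` are constant (`⟪v, x_k⟫ = a`,
`⟪v, y_k⟫ = b`) and the softmax matrices `Q^x`, `Q^y` are doubly stochastic
(`Σ_k Q^x(k,i) = 1` and `Σ_k Q^y(i,k) = 1`; the remaining sums equal 1 by construction),
then a gradient-descent step on the contrastive loss, with any step size `η`, leaves the
projections onto `v` unchanged.
-/

open RealInnerProductSpace

/-- Softmax assignment matrix `Q^x(i,j)` (rows sum to one). -/
noncomputable def Qx {d N : ℕ} (τ : ℝ) (x y : Fin N → EuclideanSpace ℝ (Fin d))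
    (i j : Fin N) : ℝ :=
  Real.exp (-‖x i - y j‖ ^ 2 / τ) / ∑ j', Real.exp (-‖x i - y j'‖ ^ 2 / τ)

/-- Softmax assignment matrix `Q^y(i,j)` (columns sum to one). -/
noncomputable def Qy {d N : ℕ} (τ : ℝ) (x y : Fin N → EuclideanSpace ℝ (Fin d))
    (i j : Fin N) : ℝ :=
  Real.exp (-‖x i - y j‖ ^ 2 / τ) / ∑ i', Real.exp (-‖x i' - y j‖ ^ 2 / τ)

/-- The multimodal contrastive loss
`L = −(1/N) Σ_i (log Q^x(i,i) + log Q^y(i,i))`. -/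
noncomputable def contrastiveLoss {d N : ℕ} (τ : ℝ)
    (x y : Fin N → EuclideanSpace ℝ (Fin d)) : ℝ :=
  -(1 / (N : ℝ)) * ∑ i, (Real.log (Qx τ x y i i) + Real.log (Qy τ x y i i))

open Finset in
/-- Key computation: the directional derivative, along `v`, of the generic single-point
piece of the contrastive loss vanishes provided the relevant softmax column sums to 1
and all the inner products `⟪u - w j, v⟫` coincide. -/
lemma key_fderiv {d N : ℕ} (hN : 0 < N) {τ : ℝ}
    (w : Fin N → EuclideanSpace ℝ (Fin d)) (u v : EuclideanSpace ℝ (Fin d)) (c : ℝ)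
    (hc : ∀ j, ⟪u - w j, v⟫ = c) (k : Fin N) (r : Fin N → ℝ) (hr : ∀ i, 0 ≤ r i)
    (hQ : ∑ i, Real.exp ((-1/τ) * ‖u - w i‖ ^ 2) / (Real.exp ((-1/τ) * ‖u - w i‖ ^ 2) + r i) = 1) :
    ∃ D : EuclideanSpace ℝ (Fin d) →L[ℝ] ℝ,
      HasFDerivAt (fun z => (-2/τ) * ‖z - w k‖ ^ 2
        - Real.log (∑ j, Real.exp ((-1/τ) * ‖z - w j‖ ^ 2))
        - ∑ i, Real.log (Real.exp ((-1/τ) * ‖z - w i‖ ^ 2) + r i)) D u ∧ D v = 0 := by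
  haveI : Nonempty (Fin N) := ⟨⟨0, hN⟩⟩
  have hepos : ∀ j : Fin N, 0 < Real.exp ((-1/τ) * ‖u - w j‖ ^ 2) := fun j => Real.exp_pos _
  have hS : (0:ℝ) < ∑ j, Real.exp ((-1/τ) * ‖u - w j‖ ^ 2) :=
    Finset.sum_pos (fun j _ => hepos j) Finset.univ_nonempty
  have hden : ∀ i, (0:ℝ) < Real.exp ((-1/τ) * ‖u - w i‖ ^ 2) + r i :=
    fun i => add_pos_of_pos_of_nonneg (hepos i) (hr i)
  have hns : ∀ j : Fin N, HasFDerivAt (fun z : EuclideanSpace ℝ (Fin d) => ‖z - w j‖ ^ 2)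
      (2 • (innerSL ℝ (u - w j)).comp (ContinuousLinearMap.id ℝ _)) u :=
    fun j => ((hasFDerivAt_id u).sub_const (w j)).norm_sq
  have hexp : ∀ j : Fin N, HasFDerivAt
      (fun z : EuclideanSpace ℝ (Fin d) => Real.exp ((-1/τ) * ‖z - w j‖ ^ 2))
      (Real.exp ((-1/τ) * ‖u - w j‖ ^ 2) •
        ((-1/τ) • (2 • (innerSL ℝ (u - w j)).comp (ContinuousLinearMap.id ℝ _)))) u :=
    fun j => ((hns j).const_mul ((-1)/τ)).exp
  have hA := (hns k).const_mul ((-2)/τ)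
  have hB := (HasFDerivAt.fun_sum (fun j (_ : j ∈ Finset.univ) => hexp j)).log hS.ne'
  have hC := HasFDerivAt.fun_sum (fun i (_ : i ∈ Finset.univ) =>
    ((hexp i).add_const (r i)).log (hden i).ne')
  refine ⟨_, (hA.sub hB).sub hC, ?_⟩
  simp only [ContinuousLinearMap.coe_sub', Pi.sub_apply, ContinuousLinearMap.coe_smul',
    Pi.smul_apply, ContinuousLinearMap.coe_sum', Finset.sum_apply,
    ContinuousLinearMap.comp_apply, ContinuousLinearMap.coe_id', id_eq, innerSL_apply_apply,
    smul_eq_mul, two_smul, ContinuousLinearMap.add_apply, hc]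
  have h1 : ∀ i : Fin N, (Real.exp (-1 / τ * ‖u - w i‖ ^ 2) + r i)⁻¹ *
      (Real.exp (-1 / τ * ‖u - w i‖ ^ 2) * (-1 / τ * (c + c)))
      = (Real.exp (-1 / τ * ‖u - w i‖ ^ 2) / (Real.exp (-1 / τ * ‖u - w i‖ ^ 2) + r i))
        * (-1 / τ * (c + c)) := fun i => by rw [div_eq_mul_inv]; ring
  rw [Finset.sum_congr rfl (fun i _ => h1 i), ← Finset.sum_mul, ← Finset.sum_mul, hQ,
    one_mul, inv_mul_cancel_left₀ hS.ne']
  ring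

open Finset in
/-- The contrastive loss with the softmax quotients expanded through `log`. -/
lemma loss_eq {d N : ℕ} (τ : ℝ) (x y : Fin N → EuclideanSpace ℝ (Fin d)) :
    contrastiveLoss τ x y = -(1/(N:ℝ)) * ∑ i,
      ((-2/τ) * ‖x i - y i‖ ^ 2
        - Real.log (∑ j, Real.exp ((-1/τ) * ‖x i - y j‖ ^ 2))
        - Real.log (∑ j, Real.exp ((-1/τ) * ‖x j - y i‖ ^ 2))) := by
  have hform : ∀ s : ℝ, (-1/τ) * s = -s/τ := fun s => by ring
  unfold contrastiveLoss Qx Qy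
  congr 1
  refine Finset.sum_congr rfl fun i _ => ?_
  have h1 : (0:ℝ) < ∑ j, Real.exp (-‖x i - y j‖ ^ 2 / τ) :=
    Finset.sum_pos (fun j _ => Real.exp_pos _) ⟨i, Finset.mem_univ i⟩
  have h2 : (0:ℝ) < ∑ j, Real.exp (-‖x j - y i‖ ^ 2 / τ) :=
    Finset.sum_pos (fun j _ => Real.exp_pos _) ⟨i, Finset.mem_univ i⟩
  rw [Real.log_div (Real.exp_ne_zero _) h1.ne', Real.log_div (Real.exp_ne_zero _) h2.ne',
    Real.log_exp]
  simp only [hform]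
  ring

open Finset in
/-- The loss as a function of the single point `x k`, in closed form. -/
lemma expand_x {d N : ℕ} (τ : ℝ) (x y : Fin N → EuclideanSpace ℝ (Fin d)) (k : Fin N) :
    (fun z => contrastiveLoss τ (Function.update x k z) y)
    = fun z => -(1/(N:ℝ)) *
        (((-2/τ) * ‖z - y k‖ ^ 2
          - Real.log (∑ j, Real.exp ((-1/τ) * ‖z - y j‖ ^ 2))
          - ∑ i, Real.log (Real.exp ((-1/τ) * ‖z - y i‖ ^ 2)
              + ∑ j ∈ univ.erase k, Real.exp ((-1/τ) * ‖x j - y i‖ ^ 2)))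
         + ∑ i ∈ univ.erase k, ((-2/τ) * ‖x i - y i‖ ^ 2
            - Real.log (∑ j, Real.exp ((-1/τ) * ‖x i - y j‖ ^ 2)))) := by
  funext z
  rw [loss_eq]
  congr 1
  have hupd : ∀ i ∈ univ.erase k, Function.update x k z i = x i :=
    fun i hi => Function.update_of_ne (Finset.mem_erase.mp hi).1 _ _
  rw [Finset.sum_sub_distrib, Finset.sum_sub_distrib]
  have hA : ∑ i, (-2/τ) * ‖Function.update x k z i - y i‖ ^ 2
      = (-2/τ) * ‖z - y k‖ ^ 2 + ∑ i ∈ univ.erase k, (-2/τ) * ‖x i - y i‖ ^ 2 := by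
    rw [← Finset.add_sum_erase _ _ (Finset.mem_univ k), Function.update_self]
    exact congrArg _ (Finset.sum_congr rfl fun i hi => by rw [hupd i hi])
  have hB : ∑ i, Real.log (∑ j, Real.exp ((-1/τ) * ‖Function.update x k z i - y j‖ ^ 2))
      = Real.log (∑ j, Real.exp ((-1/τ) * ‖z - y j‖ ^ 2))
        + ∑ i ∈ univ.erase k, Real.log (∑ j, Real.exp ((-1/τ) * ‖x i - y j‖ ^ 2)) := by
    rw [← Finset.add_sum_erase _ _ (Finset.mem_univ k), Function.update_self]
    exact congrArg _ (Finset.sum_congr rfl fun i hi => by rw [hupd i hi])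
  have hC : ∑ i, Real.log (∑ j, Real.exp ((-1/τ) * ‖Function.update x k z j - y i‖ ^ 2))
      = ∑ i, Real.log (Real.exp ((-1/τ) * ‖z - y i‖ ^ 2)
          + ∑ j ∈ univ.erase k, Real.exp ((-1/τ) * ‖x j - y i‖ ^ 2)) := by
    refine Finset.sum_congr rfl fun i _ => congrArg Real.log ?_
    rw [← Finset.add_sum_erase _ _ (Finset.mem_univ k), Function.update_self]
    congr 1
    exact Finset.sum_congr rfl fun j hj => by rw [hupd j hj]
  rw [hA, hB, hC, Finset.sum_sub_distrib]
  abel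

open Finset in
/-- The loss as a function of the single point `y k`, in closed form. -/
lemma expand_y {d N : ℕ} (τ : ℝ) (x y : Fin N → EuclideanSpace ℝ (Fin d)) (k : Fin N) :
    (fun z => contrastiveLoss τ x (Function.update y k z))
    = fun z => -(1/(N:ℝ)) *
        (((-2/τ) * ‖z - x k‖ ^ 2
          - Real.log (∑ j, Real.exp ((-1/τ) * ‖z - x j‖ ^ 2))
          - ∑ i, Real.log (Real.exp ((-1/τ) * ‖z - x i‖ ^ 2)
              + ∑ j ∈ univ.erase k, Real.exp ((-1/τ) * ‖x i - y j‖ ^ 2)))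
         + ∑ i ∈ univ.erase k, ((-2/τ) * ‖x i - y i‖ ^ 2
            - Real.log (∑ j, Real.exp ((-1/τ) * ‖x j - y i‖ ^ 2)))) := by
  funext z
  rw [loss_eq]
  congr 1
  have hupd : ∀ i ∈ univ.erase k, Function.update y k z i = y i :=
    fun i hi => Function.update_of_ne (Finset.mem_erase.mp hi).1 _ _
  rw [Finset.sum_sub_distrib, Finset.sum_sub_distrib]
  have hA : ∑ i, (-2/τ) * ‖x i - Function.update y k z i‖ ^ 2
      = (-2/τ) * ‖z - x k‖ ^ 2 + ∑ i ∈ univ.erase k, (-2/τ) * ‖x i - y i‖ ^ 2 := by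
    rw [← Finset.add_sum_erase _ _ (Finset.mem_univ k), Function.update_self,
      norm_sub_rev]
    exact congrArg _ (Finset.sum_congr rfl fun i hi => by rw [hupd i hi])
  have hB : ∑ i, Real.log (∑ j, Real.exp ((-1/τ) * ‖x i - Function.update y k z j‖ ^ 2))
      = ∑ i, Real.log (Real.exp ((-1/τ) * ‖z - x i‖ ^ 2)
          + ∑ j ∈ univ.erase k, Real.exp ((-1/τ) * ‖x i - y j‖ ^ 2)) := by
    refine Finset.sum_congr rfl fun i _ => congrArg Real.log ?_
    rw [← Finset.add_sum_erase _ _ (Finset.mem_univ k), Function.update_self,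
      norm_sub_rev]
    congr 1
    exact Finset.sum_congr rfl fun j hj => by rw [hupd j hj]
  have hC : ∑ i, Real.log (∑ j, Real.exp ((-1/τ) * ‖x j - Function.update y k z i‖ ^ 2))
      = Real.log (∑ j, Real.exp ((-1/τ) * ‖z - x j‖ ^ 2))
        + ∑ i ∈ univ.erase k, Real.log (∑ j, Real.exp ((-1/τ) * ‖x j - y i‖ ^ 2)) := by
    refine ((Finset.add_sum_erase univ (fun i => Real.log (∑ j, Real.exp ((-1/τ) * ‖x j - Function.update y k z i‖ ^ 2))) (Finset.mem_univ k)).symm).trans ?_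
    exact congrArg₂ (· + ·)
      (congrArg Real.log (Finset.sum_congr rfl fun j _ => by
        rw [Function.update_self, norm_sub_rev]))
      (Finset.sum_congr rfl fun i hi => by rw [hupd i hi])
  rw [hA, hB, hC, Finset.sum_sub_distrib]
  abel

lemma inner_gradient_eq {d : ℕ} (f : EuclideanSpace ℝ (Fin d) → ℝ)
    (p v : EuclideanSpace ℝ (Fin d)) : ⟪v, gradient f p⟫ = fderiv ℝ f p v := by
  rw [real_inner_comm]
  exact InnerProductSpace.toDual_symm_apply

theorem gradient_step_preserves_projection
    (d N : ℕ) (hd : 0 < d) (hN : 0 < N) (τ : ℝ) (hτ : 0 < τ)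
    (x y : Fin N → EuclideanSpace ℝ (Fin d))
    (v : EuclideanSpace ℝ (Fin d)) (a b : ℝ)
    (hva : ∀ k, ⟪v, x k⟫ = a) (hvb : ∀ k, ⟪v, y k⟫ = b)
    (hQx : ∀ i, ∑ k, Qx τ x y k i = 1)
    (hQy : ∀ i, ∑ k, Qy τ x y i k = 1)
    (η : ℝ) (x' y' : Fin N → EuclideanSpace ℝ (Fin d))
    (hx' : ∀ k, x' k =
      x k - η • gradient (fun z => contrastiveLoss τ (Function.update x k z) y) (x k))
    (hy' : ∀ k, y' k =
      y k - η • gradient (fun z => contrastiveLoss τ x (Function.update y k z)) (y k)) :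
    (∀ k, ⟪v, x' k⟫ = a) ∧ (∀ k, ⟪v, y' k⟫ = b) := by
  have hform : ∀ s : ℝ, (-1/τ) * s = -s/τ := fun s => by ring
  have hxa : ∀ j, ⟪x j, v⟫ = a := fun j => by rw [real_inner_comm]; exact hva j
  have hyb : ∀ j, ⟪y j, v⟫ = b := fun j => by rw [real_inner_comm]; exact hvb j
  constructor
  · intro k
    have hc : ∀ j, ⟪x k - y j, v⟫ = a - b := fun j => by
      rw [inner_sub_left, hxa, hyb]
    have hQ' : ∑ i, Real.exp ((-1/τ) * ‖x k - y i‖ ^ 2) /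
        (Real.exp ((-1/τ) * ‖x k - y i‖ ^ 2)
          + ∑ j ∈ Finset.univ.erase k, Real.exp ((-1/τ) * ‖x j - y i‖ ^ 2)) = 1 := by
      refine Eq.trans ?_ (hQy k)
      refine Finset.sum_congr rfl fun i _ => ?_
      rw [Qy]
      simp only [hform]
      rw [Finset.add_sum_erase _ (fun j => Real.exp (-‖x j - y i‖ ^ 2 / τ))
        (Finset.mem_univ k)]
    obtain ⟨D, hD, hDv⟩ := key_fderiv hN y (x k) v (a - b) hc k _
      (fun i => Finset.sum_nonneg fun j _ => (Real.exp_pos _).le) hQ'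
    have hgrad : HasFDerivAt (fun z => contrastiveLoss τ (Function.update x k z) y)
        ((-(1/(N:ℝ))) • D) (x k) := by
      rw [expand_x τ x y k]
      exact (hD.add_const _).const_mul _
    have hz : ⟪v, gradient (fun z => contrastiveLoss τ (Function.update x k z) y) (x k)⟫
        = 0 := by
      rw [inner_gradient_eq, hgrad.fderiv]
      simp [hDv]
    rw [hx' k, inner_sub_right, real_inner_smul_right, hz, mul_zero, sub_zero, hva k]
  · intro k
    have hc : ∀ j, ⟪y k - x j, v⟫ = b - a := fun j => by
      rw [inner_sub_left, hyb, hxa]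
    have hQ' : ∑ i, Real.exp ((-1/τ) * ‖y k - x i‖ ^ 2) /
        (Real.exp ((-1/τ) * ‖y k - x i‖ ^ 2)
          + ∑ j ∈ Finset.univ.erase k, Real.exp ((-1/τ) * ‖x i - y j‖ ^ 2)) = 1 := by
      refine Eq.trans ?_ (hQx k)
      refine Finset.sum_congr rfl fun i _ => ?_
      rw [Qx]
      simp only [hform, norm_sub_rev (y k)]
      rw [Finset.add_sum_erase _ (fun j => Real.exp (-‖x i - y j‖ ^ 2 / τ))
        (Finset.mem_univ k)]
    obtain ⟨D, hD, hDv⟩ := key_fderiv hN x (y k) v (b - a) hc k _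
      (fun i => Finset.sum_nonneg fun j _ => (Real.exp_pos _).le) hQ'
    have hgrad : HasFDerivAt (fun z => contrastiveLoss τ x (Function.update y k z))
        ((-(1/(N:ℝ))) • D) (y k) := by
      rw [expand_y τ x y k]
      exact (hD.add_const _).const_mul _
    have hz : ⟪v, gradient (fun z => contrastiveLoss τ x (Function.update y k z)) (y k)⟫
        = 0 := by
      rw [inner_gradient_eq, hgrad.fderiv]
      simp [hDv]
    rw [hy' k, inner_sub_right, real_inner_smul_right, hz, mul_zero, sub_zero, hvb k]
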